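/- If A is a critical independent set of a graph G and X = A ∪ N(A), then α(G - X) ≤ μ(G - X), where G - X is the subgraph induced on V(G) - X. -/

import Mathlib

open SimpleGraph

variable {V : Type*}

/-- A set of vertices is independent: no two of its vertices are adjacent. -/
def IsIndep (G : SimpleGraph V) (s : Set V) : Prop :=
  s.Pairwise fun a b => ¬ G.Adj a b

/-- The independence number α(G). -/
noncomputable def alphaNum (G : SimpleGraph V) : ℕ :=
  sSup {n | ∃ s : Set V, IsIndep G s ∧ s.ncard = n}

/-- The matching number μ(G). -/
noncomputable def muNum (G : SimpleGraph V) : ℕ :=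
  sSup {n | ∃ M : SimpleGraph.Subgraph G, M.IsMatching ∧ M.edgeSet.ncard = n}

/-- The neighborhood N(A) of a set of vertices. -/
def nbhd (G : SimpleGraph V) (A : Set V) : Set V := {v | ∃ a ∈ A, G.Adj a v}

/-- The difference d(A) = |A| - |N(A)| of a set of vertices. -/
noncomputable def diffSet (G : SimpleGraph V) (A : Set V) : ℤ :=
  (A.ncard : ℤ) - (nbhd G A).ncard

/-- The critical difference d(G). -/
noncomputable def critDiff (G : SimpleGraph V) : ℤ :=
  sSup {d | ∃ I : Set V, IsIndep G I ∧ diffSet G I = d}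

/-- A critical independent set: an independent set attaining the critical difference. -/
def IsCriticalIndep (G : SimpleGraph V) (A : Set V) : Prop :=
  IsIndep G A ∧ diffSet G A = critDiff G

/-- ker(G): the intersection of all critical independent sets. -/
noncomputable def kerSet (G : SimpleGraph V) : Set V :=
  ⋂₀ {A | IsCriticalIndep G A}

/-- A maximum independent set. -/
noncomputable def IsMaxIndep (G : SimpleGraph V) (S : Set V) : Prop :=
  IsIndep G S ∧ S.ncard = alphaNum G

/-- core(G): the intersection of all maximum independent sets. -/
noncomputable def coreSet (G : SimpleGraph V) : Set V :=
  ⋂₀ {S | IsMaxIndep G S}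

/-- A König–Egerváry graph: α(G) + μ(G) = n(G). -/
def KonigEgervary (G : SimpleGraph V) : Prop :=
  alphaNum G + muNum G = Nat.card V


section Aux
variable {V : Type*}

lemma alpha_le_mu_of_hall {W : Type*} [Fintype W] (H : SimpleGraph W)
    (h : ∀ S : Set W, IsIndep H S → S.ncard ≤ (nbhd H S).ncard) :
    alphaNum H ≤ muNum H := by
  classical
  -- the alpha set is nonempty and bounded
  have hbddα : BddAbove {n | ∃ s : Set W, IsIndep H s ∧ s.ncard = n} := by
    refine ⟨Fintype.card W, ?_⟩
    rintro n ⟨s, _, rfl⟩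
    simpa [Set.ncard_univ, Nat.card_eq_fintype_card] using
      Set.ncard_le_ncard (Set.subset_univ s) Set.finite_univ
  have hne : ({n | ∃ s : Set W, IsIndep H s ∧ s.ncard = n}).Nonempty :=
    ⟨0, ∅, by simp [IsIndep], by simp⟩
  obtain ⟨S, hSind, hScard⟩ := Nat.sSup_mem hne hbddα
  -- Hall's condition on the bipartite graph between S and its complement
  set t : S → Finset W := fun x => H.neighborFinset ↑x with ht
  have hall : ∀ s : Finset S, s.card ≤ (s.biUnion t).card := by
    intro s
    set T : Set W := Subtype.val '' (↑s : Set S) with hT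
    have hTind : IsIndep H T := by
      intro a ha b hb hab
      obtain ⟨x, hx, rfl⟩ := ha
      obtain ⟨y, hy, rfl⟩ := hb
      exact hSind x.2 y.2 hab
    have h1 : T.ncard = s.card := by
      rw [hT, Set.ncard_image_of_injective _ Subtype.val_injective, Set.ncard_coe_finset]
    have h2 : nbhd H T = ↑(s.biUnion t) := by
      ext v
      simp only [nbhd, Set.mem_setOf_eq, Finset.coe_biUnion, Set.mem_iUnion, ht,
        Finset.mem_coe, mem_neighborFinset, hT, Set.mem_image]
      constructor
      · rintro ⟨a, ⟨x, hx, rfl⟩, hadj⟩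
        exact ⟨x, hx, hadj⟩
      · rintro ⟨x, hx, hadj⟩
        exact ⟨↑x, ⟨x, hx, rfl⟩, hadj⟩
    have := h T hTind
    rwa [h1, h2, Set.ncard_coe_finset] at this
  obtain ⟨f, hfinj, hf⟩ := (Finset.all_card_le_biUnion_card_iff_exists_injective t).mp hall
  have hfadj : ∀ x : S, H.Adj ↑x (f x) := by
    intro x; have := hf x; rwa [ht, mem_neighborFinset] at this
  have hfS : ∀ x : S, f x ∉ S := by
    intro x hx
    have hne' : (↑x : W) ≠ f x := H.ne_of_adj (hfadj x)
    exact hSind x.2 hx hne' (hfadj x)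
  -- build the matching
  set M : Subgraph H := {
    verts := S ∪ Set.range (fun x : S => f x)
    Adj := fun v w => ∃ x : S, (v = ↑x ∧ w = f x) ∨ (w = ↑x ∧ v = f x)
    adj_sub := by rintro v w ⟨x, (⟨rfl, rfl⟩ | ⟨rfl, rfl⟩)⟩
                  · exact hfadj x
                  · exact (hfadj x).symm
    edge_vert := by rintro v w ⟨x, (⟨rfl, rfl⟩ | ⟨rfl, rfl⟩)⟩
                    · exact Or.inl x.2
                    · exact Or.inr ⟨x, rfl⟩
    symm := by constructor; rintro v w ⟨x, (⟨rfl, rfl⟩ | ⟨rfl, rfl⟩)⟩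
               · exact ⟨x, Or.inr ⟨rfl, rfl⟩⟩
               · exact ⟨x, Or.inl ⟨rfl, rfl⟩⟩ } with hM
  have hmatch : M.IsMatching := by
    rintro v (hv | ⟨x₀, rfl⟩)
    · refine ⟨f ⟨v, hv⟩, ⟨⟨v, hv⟩, Or.inl ⟨rfl, rfl⟩⟩, ?_⟩
      rintro w ⟨x, (⟨hvx, rfl⟩ | ⟨rfl, hvf⟩)⟩
      · have : x = ⟨v, hv⟩ := Subtype.ext hvx.symm
        rw [this]
      · exact absurd (hvf ▸ hv) (hfS x)
    · refine ⟨↑x₀, ⟨x₀, Or.inr ⟨rfl, rfl⟩⟩, ?_⟩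
      rintro w ⟨x, (⟨hvx, rfl⟩ | ⟨rfl, hvf⟩)⟩
      · exact absurd (show f x₀ ∈ S from by rw [show f x₀ = ↑x from hvx]; exact x.2) (hfS x₀)
      · rw [hfinj hvf.symm]
  -- count edges
  set g : W → Sym2 W := fun v => s(v, if h : v ∈ S then f ⟨v, h⟩ else v) with hg
  have hgsub : g '' S ⊆ M.edgeSet := by
    rintro e ⟨v, hv, rfl⟩
    rw [hg]
    simp only [hv, dif_pos]
    rw [Subgraph.mem_edgeSet]
    exact ⟨⟨v, hv⟩, Or.inl ⟨rfl, rfl⟩⟩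
  have hginj : Set.InjOn g S := by
    intro a ha b hb hab
    simp only [hg] at hab
    rw [dif_pos ha, dif_pos hb] at hab
    rcases Sym2.eq_iff.mp hab with ⟨h1, _⟩ | ⟨h1, h2⟩
    · exact h1
    · exact absurd (show f ⟨b, hb⟩ ∈ S from h1 ▸ ha) (hfS ⟨b, hb⟩)
  have hcount : S.ncard ≤ M.edgeSet.ncard := by
    calc S.ncard = (g '' S).ncard := (Set.ncard_image_of_injOn hginj).symm
    _ ≤ M.edgeSet.ncard := Set.ncard_le_ncard hgsub (Set.toFinite _)
  -- conclude
  have hbddμ : BddAbove {n | ∃ M : Subgraph H, M.IsMatching ∧ M.edgeSet.ncard = n} := by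
    refine ⟨Fintype.card (Sym2 W), ?_⟩
    rintro n ⟨N, _, rfl⟩
    simpa [Set.ncard_univ, Nat.card_eq_fintype_card] using
      Set.ncard_le_ncard (Set.subset_univ N.edgeSet) Set.finite_univ
  calc alphaNum H = S.ncard := hScard.symm
  _ ≤ M.edgeSet.ncard := hcount
  _ ≤ muNum H := le_csSup hbddμ ⟨M, hmatch, rfl⟩

lemma nbhd_union {V : Type*} (G : SimpleGraph V) (A B : Set V) :
    nbhd G (A ∪ B) = nbhd G A ∪ nbhd G B := by
  ext v
  simp only [nbhd, Set.mem_setOf_eq, Set.mem_union]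
  constructor
  · rintro ⟨a, (ha | ha), hadj⟩
    · exact Or.inl ⟨a, ha, hadj⟩
    · exact Or.inr ⟨a, ha, hadj⟩
  · rintro (⟨a, ha, hadj⟩ | ⟨a, ha, hadj⟩)
    · exact ⟨a, Or.inl ha, hadj⟩
    · exact ⟨a, Or.inr ha, hadj⟩

lemma key_hall {V : Type*} [Fintype V] (G : SimpleGraph V) (A : Set V)
    (hA : IsCriticalIndep G A)
    (S : Set ↥(A ∪ nbhd G A)ᶜ) (hS : IsIndep (G.induce (A ∪ nbhd G A)ᶜ) S) :
    S.ncard ≤ (nbhd (G.induce (A ∪ nbhd G A)ᶜ) S).ncard := by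
  classical
  set S' : Set V := Subtype.val '' S with hS'
  have hS'X : S' ⊆ (A ∪ nbhd G A)ᶜ := by rintro v ⟨x, _, rfl⟩; exact x.2
  -- elements of S' are not adjacent to A, and not in A
  have hS'nA : ∀ s ∈ S', ∀ a ∈ A, ¬ G.Adj a s := by
    intro s hs a ha hadj
    exact (hS'X hs) (Or.inr ⟨a, ha, hadj⟩)
  have hdisj : Disjoint A S' := by
    rw [Set.disjoint_right]
    intro v hv hvA
    exact (hS'X hv) (Or.inl hvA)
  -- A ∪ S' is independent
  have hind : IsIndep G (A ∪ S') := by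
    rintro u (hu | hu) v (hv | hv) huv hadj
    · exact hA.1 hu hv huv hadj
    · exact hS'nA v hv u hu hadj
    · exact hS'nA u hu v hv hadj.symm
    · obtain ⟨x, hx, rfl⟩ := hu
      obtain ⟨y, hy, rfl⟩ := hv
      exact hS hx hy (fun e => huv (congrArg Subtype.val e)) hadj
  -- criticality
  have hbdd : BddAbove {d | ∃ I : Set V, IsIndep G I ∧ diffSet G I = d} := by
    refine ⟨(Fintype.card V : ℤ), ?_⟩
    rintro d ⟨I, _, rfl⟩
    have h1 : I.ncard ≤ Fintype.card V := by
      simpa [Set.ncard_univ, Nat.card_eq_fintype_card] using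
        Set.ncard_le_ncard (Set.subset_univ I) Set.finite_univ
    have h2 : (0 : ℤ) ≤ (nbhd G I).ncard := Int.ofNat_nonneg _
    unfold diffSet
    omega
  have hcrit : diffSet G (A ∪ S') ≤ diffSet G A := by
    rw [hA.2]
    exact le_csSup hbdd ⟨A ∪ S', hind, rfl⟩
  -- compute cardinalities
  have hcard1 : (A ∪ S').ncard = A.ncard + S'.ncard :=
    Set.ncard_union_eq hdisj (Set.toFinite _) (Set.toFinite _)
  set D : Set V := nbhd G S' \ nbhd G A with hD
  have hcard2 : (nbhd G (A ∪ S')).ncard = (nbhd G A).ncard + D.ncard := by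
    rw [nbhd_union]
    have : nbhd G A ∪ nbhd G S' = nbhd G A ∪ D := by
      rw [hD, Set.union_diff_self]
    rw [this, Set.ncard_union_eq disjoint_sdiff_self_right (Set.toFinite _) (Set.toFinite _)]
  -- main inequality in ℤ
  have hmain : (S'.ncard : ℤ) ≤ D.ncard := by
    have := hcrit
    unfold diffSet at this
    rw [hcard1, hcard2] at this
    push_cast at this ⊢
    omega
  -- D injects into the induced neighborhood
  have hDsub : D ⊆ Subtype.val '' (nbhd (G.induce (A ∪ nbhd G A)ᶜ) S) := by
    rintro v ⟨⟨s, hsS', hadj⟩, hvnA⟩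
    have hvX : v ∈ (A ∪ nbhd G A)ᶜ := by
      intro hvX
      rcases hvX with hvA | hvN
      · exact (hS'X hsS') (Or.inr ⟨v, hvA, hadj.symm⟩)
      · exact hvnA hvN
    obtain ⟨x, hx, rfl⟩ := hsS'
    exact ⟨⟨v, hvX⟩, ⟨x, hx, hadj⟩, rfl⟩
  have hfinal : D.ncard ≤ (nbhd (G.induce (A ∪ nbhd G A)ᶜ) S).ncard := by
    calc D.ncard ≤ (Subtype.val '' (nbhd (G.induce (A ∪ nbhd G A)ᶜ) S)).ncard :=
          Set.ncard_le_ncard hDsub (Set.toFinite _)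
    _ = (nbhd (G.induce (A ∪ nbhd G A)ᶜ) S).ncard :=
          Set.ncard_image_of_injective _ Subtype.val_injective
  have hScard : S.ncard = S'.ncard :=
    (Set.ncard_image_of_injective _ Subtype.val_injective).symm
  omega

end Aux

theorem stmt_6 [Fintype V] (G : SimpleGraph V) (A : Set V)
    (hA : IsCriticalIndep G A) :
    alphaNum (G.induce (A ∪ nbhd G A)ᶜ) ≤ muNum (G.induce (A ∪ nbhd G A)ᶜ) := by
  classical
  exact alpha_le_mu_of_hall _ (fun S hS => key_hall G A hA S hS)
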